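/- Let π ∈ ℝ^{n_p}, L ∈ ℝ^{n×1}, let W_1, W_2 ∈ ℝ^{n×n} be symmetric positive definite, and let P_1, P_2 ∈ ℝ^{n×n} be symmetric positive definite solutions of the Lyapunov equations F̄(π)^⊤P_1 + P_1 F̄(π) = −W_1 and (F̄(π)+L H̄(π))^⊤P_2 + P_2 (F̄(π)+L H̄(π)) = −W_2. Define V(z,e) := z^⊤P_1 z + e^⊤P_2 e, the dynamics ż := A z + B(z^⊤Q z + H̄(π)(z+e)) and ė := (F̄(π)+L H̄(π)) e + (B+L) H̄(π) z + (B+L)(2 z^⊤Q e + e^⊤Q e), and the constants c_1 := min{λ_min(W_1), λ_min(W_2)} / max{λ_max(P_1), λ_max(P_2)}, c_3 := (2‖P_1 B H̄(π)‖ + 2‖H̄(π)^⊤(B+L)^⊤P_2‖)/√(λ_min(P_1)λ_min(P_2)), c_4 := 2‖P_1 B‖‖Q‖/λ_min(P_1)^{3/2} + 4‖P_2(B+L)‖‖Q‖/(√(λ_min(P_1))λ_min(P_2)) + 2‖P_2(B+L)‖‖Q‖/λ_min(P_2)^{3/2}, and c_2 := c_1 − c_3. Then for all z, e ∈ ℝ^n: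 2 z^⊤P_1 ż + 2 e^⊤P_2 ė ≤ −c_2 · V(z,e) + c_4 · V(z,e)^{3/2}. -/

import Mathlib

open Matrix
set_option maxHeartbeats 1000000
noncomputable section

/-- Spectral norm: operator norm induced by the Euclidean norms. -/
def opNorm {m n : Type*} [Fintype m] [Fintype n] [DecidableEq n] (M : Matrix m n ℝ) : ℝ :=
  ‖(Matrix.toEuclideanLin M).toContinuousLinearMap‖

/-- Euclidean norm of a real vector. -/
def evnorm {n : Type*} [Fintype n] (v : n → ℝ) : ℝ :=
  Real.sqrt (∑ i, (v i) ^ 2)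

variable {np nc : ℕ}

/-- `A = [[A_p, B_p C_c],[0, A_c]]`. -/
def Amat (Ap : Matrix (Fin np) (Fin np) ℝ) (Ac : Matrix (Fin nc) (Fin nc) ℝ)
    (Bp : Matrix (Fin np) (Fin 1) ℝ) (Cc : Matrix (Fin 1) (Fin nc) ℝ) :
    Matrix (Fin np ⊕ Fin nc) (Fin np ⊕ Fin nc) ℝ :=
  Matrix.fromBlocks Ap (Bp * Cc) 0 Ac

/-- `B = [B_p D_c; B_c]`. -/
def Bmat (Bp : Matrix (Fin np) (Fin 1) ℝ) (Bc : Matrix (Fin nc) (Fin 1) ℝ) (Dc : ℝ) :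
    Matrix (Fin np ⊕ Fin nc) (Fin 1) ℝ :=
  Matrix.fromRows (Dc • Bp) Bc

/-- `H̄(π) = [2 π^⊤ Q_p, 0]`. -/
def Hbar (Qp : Matrix (Fin np) (Fin np) ℝ) (π : Fin np → ℝ) :
    Matrix (Fin 1) (Fin np ⊕ Fin nc) ℝ :=
  Matrix.of fun _ j => Sum.elim (fun i => 2 * (π ᵥ* Qp) i) (fun _ => 0) j

/-- `F̄(π) = A + B H̄(π)`. -/
def Fbar (Ap : Matrix (Fin np) (Fin np) ℝ) (Ac : Matrix (Fin nc) (Fin nc) ℝ)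
    (Bp : Matrix (Fin np) (Fin 1) ℝ) (Bc : Matrix (Fin nc) (Fin 1) ℝ)
    (Cc : Matrix (Fin 1) (Fin nc) ℝ) (Dc : ℝ)
    (Qp : Matrix (Fin np) (Fin np) ℝ) (π : Fin np → ℝ) :
    Matrix (Fin np ⊕ Fin nc) (Fin np ⊕ Fin nc) ℝ :=
  Amat Ap Ac Bp Cc + Bmat Bp Bc Dc * Hbar Qp π

/-- `Q = [[Q_p, 0],[0, 0]]`. -/
def Qmat (Qp : Matrix (Fin np) (Fin np) ℝ) :
    Matrix (Fin np ⊕ Fin nc) (Fin np ⊕ Fin nc) ℝ :=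
  Matrix.fromBlocks Qp 0 0 0

/-- The closed-loop vector field `ż = Az + B(z^⊤Qz + H̄(π)(z+e))`
(`B` column acting by scalar multiplication). -/
def zdot (Ap : Matrix (Fin np) (Fin np) ℝ) (Ac : Matrix (Fin nc) (Fin nc) ℝ)
    (Bp : Matrix (Fin np) (Fin 1) ℝ) (Bc : Matrix (Fin nc) (Fin 1) ℝ)
    (Cc : Matrix (Fin 1) (Fin nc) ℝ) (Dc : ℝ)
    (Qp : Matrix (Fin np) (Fin np) ℝ) (π : Fin np → ℝ)
    (z e : Fin np ⊕ Fin nc → ℝ) : Fin np ⊕ Fin nc → ℝ :=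
  Amat Ap Ac Bp Cc *ᵥ z +
    (z ⬝ᵥ (Qmat Qp *ᵥ z) + (fun j => Hbar Qp π 0 j) ⬝ᵥ (z + e)) •
      fun i => Bmat Bp Bc Dc i 0

/-- The estimation-error vector field
`ė = (F̄(π)+LH̄(π))e + (B+L)H̄(π)z + (B+L)(2z^⊤Qe + e^⊤Qe)`. -/
def edot (Ap : Matrix (Fin np) (Fin np) ℝ) (Ac : Matrix (Fin nc) (Fin nc) ℝ)
    (Bp : Matrix (Fin np) (Fin 1) ℝ) (Bc : Matrix (Fin nc) (Fin 1) ℝ)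
    (Cc : Matrix (Fin 1) (Fin nc) ℝ) (Dc : ℝ)
    (Qp : Matrix (Fin np) (Fin np) ℝ) (π : Fin np → ℝ)
    (L : Matrix (Fin np ⊕ Fin nc) (Fin 1) ℝ)
    (z e : Fin np ⊕ Fin nc → ℝ) : Fin np ⊕ Fin nc → ℝ :=
  (Fbar Ap Ac Bp Bc Cc Dc Qp π + L * Hbar Qp π) *ᵥ e +
    ((Bmat Bp Bc Dc + L) * Hbar Qp π) *ᵥ z +
    (2 * (z ⬝ᵥ (Qmat Qp *ᵥ e)) + e ⬝ᵥ (Qmat Qp *ᵥ e)) •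
      fun i => (Bmat Bp Bc Dc + L) i 0

section helpers
variable {m k : Type*} [Fintype m] [Fintype k] [DecidableEq m] [DecidableEq k]

lemma evnorm_nonneg (v : m → ℝ) : 0 ≤ evnorm v := Real.sqrt_nonneg _

lemma sq_evnorm (v : m → ℝ) : evnorm v ^ 2 = ∑ i, v i ^ 2 :=
  Real.sq_sqrt (Finset.sum_nonneg fun _ _ => sq_nonneg _)

lemma evnorm_eq_norm (v : m → ℝ) : evnorm v = ‖(WithLp.equiv 2 (m → ℝ)).symm v‖ := by
  rw [EuclideanSpace.norm_eq]
  unfold evnorm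
  congr 1
  apply Finset.sum_congr rfl
  intro i _
  simp [Real.norm_eq_abs, sq_abs]

lemma abs_dot_mulVec_le (M : Matrix m k ℝ) (x : m → ℝ) (y : k → ℝ) :
    |x ⬝ᵥ (M *ᵥ y)| ≤ opNorm M * evnorm x * evnorm y := by
  set X := (WithLp.equiv 2 (m → ℝ)).symm x with hX
  set Y := (WithLp.equiv 2 (k → ℝ)).symm y with hY
  have h1 : x ⬝ᵥ (M *ᵥ y) = inner ℝ X ((Matrix.toEuclideanLin M).toContinuousLinearMap Y) := by
    simp only [LinearMap.coe_toContinuousLinearMap', hY, Matrix.toEuclideanLin_apply]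
    simp [PiLp.inner_apply, dotProduct, hX, mul_comm]
  rw [h1]
  calc |inner ℝ X ((Matrix.toEuclideanLin M).toContinuousLinearMap Y)|
      ≤ ‖X‖ * ‖(Matrix.toEuclideanLin M).toContinuousLinearMap Y‖ := abs_real_inner_le_norm _ _
    _ ≤ ‖X‖ * (opNorm M * ‖Y‖) := by
        exact mul_le_mul_of_nonneg_left (ContinuousLinearMap.le_opNorm _ _) (norm_nonneg _)
    _ = opNorm M * evnorm x * evnorm y := by rw [evnorm_eq_norm x, evnorm_eq_norm y]; ring

section Rayleigh
variable [Nonempty m]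

lemma rayleigh_bounds (M : Matrix m m ℝ) (hM : M.IsHermitian) (x : m → ℝ) :
    (⨅ i, hM.eigenvalues i) * ∑ i, x i ^ 2 ≤ x ⬝ᵥ (M *ᵥ x) ∧
      x ⬝ᵥ (M *ᵥ x) ≤ (⨆ i, hM.eigenvalues i) * ∑ i, x i ^ 2 := by
  classical
  set U : Matrix m m ℝ := (Matrix.IsHermitian.eigenvectorUnitary hM : Matrix m m ℝ) with hU
  set y : m → ℝ := Uᵀ *ᵥ x with hy
  have hstar : star U = Uᵀ := by
    rw [Matrix.star_eq_conjTranspose, Matrix.conjTranspose_eq_transpose_of_trivial]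
  have hUU : U * Uᵀ = 1 := by
    rw [← hstar]
    exact (Matrix.mem_unitaryGroup_iff).mp (Matrix.IsHermitian.eigenvectorUnitary hM).2
  have hsum : ∑ i, y i ^ 2 = ∑ i, x i ^ 2 := by
    have h1 : ∑ i, y i ^ 2 = y ⬝ᵥ y := by simp [dotProduct, sq]
    have h2 : ∑ i, x i ^ 2 = x ⬝ᵥ x := by simp [dotProduct, sq]
    rw [h1, h2, hy, Matrix.mulVec_transpose, ← Matrix.dotProduct_mulVec,
      ← Matrix.mulVec_transpose, Matrix.mulVec_mulVec, hUU, Matrix.one_mulVec]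
  have hdiag : x ⬝ᵥ (M *ᵥ x) = ∑ i, hM.eigenvalues i * y i ^ 2 := by
    conv_lhs => rw [hM.spectral_theorem]
    rw [Unitary.conjStarAlgAut_apply, ← hU, hstar]
    rw [← Matrix.mulVec_mulVec, ← Matrix.mulVec_mulVec, Matrix.dotProduct_mulVec x U,
      ← Matrix.mulVec_transpose, ← hy]
    simp only [dotProduct, Matrix.mulVec_diagonal]
    apply Finset.sum_congr rfl
    intro i _
    simp
    ring
  have hbdd : BddBelow (Set.range hM.eigenvalues) := Set.Finite.bddBelow (Set.finite_range _)
  have hbdd2 : BddAbove (Set.range hM.eigenvalues) := Set.Finite.bddAbove (Set.finite_range _)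
  constructor
  · rw [hdiag, ← hsum, Finset.mul_sum]
    apply Finset.sum_le_sum
    intro i _
    exact mul_le_mul_of_nonneg_right (ciInf_le hbdd i) (sq_nonneg _)
  · rw [hdiag, ← hsum, Finset.mul_sum]
    apply Finset.sum_le_sum
    intro i _
    exact mul_le_mul_of_nonneg_right (le_ciSup hbdd2 i) (sq_nonneg _)

end Rayleigh

lemma colrow_mulVec (C : Matrix m (Fin 1) ℝ) (R : Matrix (Fin 1) k ℝ) (v : k → ℝ) :
    (C * R) *ᵥ v = ((fun j => R 0 j) ⬝ᵥ v) • (fun i => C i 0) := by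
  funext i
  simp only [Matrix.mulVec, dotProduct, Matrix.mul_apply, Fin.sum_univ_one, Pi.smul_apply,
    smul_eq_mul]
  rw [Finset.sum_mul]
  apply Finset.sum_congr rfl
  intro j _
  ring

lemma mulVec_col (P : Matrix m m ℝ) (C : Matrix m (Fin 1) ℝ) :
    (P *ᵥ fun i => C i 0) = fun i => (P * C) i 0 := by
  funext i
  simp [Matrix.mulVec, dotProduct, Matrix.mul_apply]

lemma col_eq_mulVec_one (C : Matrix m (Fin 1) ℝ) :
    (fun i => C i 0) = C *ᵥ (fun _ => 1) := by
  funext i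
  simp [Matrix.mulVec, dotProduct]

lemma evnorm_one1 : evnorm (fun _ : Fin 1 => (1 : ℝ)) = 1 := by
  simp [evnorm]

lemma dot_mulVec_transpose (M : Matrix m k ℝ) (x : m → ℝ) (y : k → ℝ) :
    x ⬝ᵥ (M *ᵥ y) = y ⬝ᵥ (Mᵀ *ᵥ x) := by
  rw [Matrix.dotProduct_mulVec, ← Matrix.mulVec_transpose, dotProduct_comm]

lemma abs_dot_col_le (P : Matrix m m ℝ) (C : Matrix m (Fin 1) ℝ) (x : m → ℝ) :
    |x ⬝ᵥ (P *ᵥ fun i => C i 0)| ≤ opNorm (P * C) * evnorm x := by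
  rw [mulVec_col, col_eq_mulVec_one]
  have := abs_dot_mulVec_le (P * C) x (fun _ => 1)
  rwa [evnorm_one1, mul_one] at this

lemma mul_le_of_abs (x y a b : ℝ) (hx : |x| ≤ a) (hy : |y| ≤ b) : x * y ≤ a * b := by
  calc x * y ≤ |x * y| := le_abs_self _
    _ = |x| * |y| := abs_mul _ _
    _ ≤ a * b := mul_le_mul hx hy (abs_nonneg _) ((abs_nonneg x).trans hx)

lemma rpow32 (x : ℝ) (hx : 0 ≤ x) : x ^ ((3 : ℝ)/2) = Real.sqrt x ^ 3 := by
  rw [Real.sqrt_eq_rpow, ← Real.rpow_natCast (x ^ ((1:ℝ)/2)) 3, ← Real.rpow_mul hx]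
  norm_num

lemma lyap_dot (Fm Wm Pm : Matrix m m ℝ) (hPt : Pmᵀ = Pm)
    (hly : Fmᵀ * Pm + Pm * Fm = -Wm) (v : m → ℝ) :
    2 * (v ⬝ᵥ (Pm *ᵥ (Fm *ᵥ v))) = -(v ⬝ᵥ (Wm *ᵥ v)) := by
  have h1 : v ⬝ᵥ ((Fmᵀ * Pm) *ᵥ v) = (Pm *ᵥ v) ⬝ᵥ (Fm *ᵥ v) := by
    rw [← Matrix.mulVec_mulVec, dot_mulVec_transpose, Matrix.transpose_transpose,
      dotProduct_comm]
  have h2 : v ⬝ᵥ (Pm *ᵥ (Fm *ᵥ v)) = (Pm *ᵥ v) ⬝ᵥ (Fm *ᵥ v) := by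
    rw [dot_mulVec_transpose, hPt, dotProduct_comm]
  have h2' : v ⬝ᵥ ((Pm * Fm) *ᵥ v) = (Pm *ᵥ v) ⬝ᵥ (Fm *ᵥ v) := by
    rw [← Matrix.mulVec_mulVec]; exact h2
  have h3 := congrArg (fun M => v ⬝ᵥ (M *ᵥ v)) hly
  simp only [Matrix.add_mulVec, dotProduct_add, Matrix.neg_mulVec,
    dotProduct_neg] at h3
  rw [h1, h2'] at h3
  rw [h2]
  linarith

end helpers

lemma main_core {n' : Type*} [Fintype n'] [DecidableEq n'] [Nonempty n']
    (F Qm W1 W2 P1 P2 : Matrix n' n' ℝ) (Bm L : Matrix n' (Fin 1) ℝ)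
    (H : Matrix (Fin 1) n' ℝ)
    (hW1 : W1.PosDef) (hW2 : W2.PosDef) (hP1 : P1.PosDef) (hP2 : P2.PosDef)
    (hLyap1 : Fᵀ * P1 + P1 * F = -W1)
    (hLyap2 : (F + L * H)ᵀ * P2 + P2 * (F + L * H) = -W2)
    (c1 c3 c4 c2 : ℝ)
    (hc1 : c1 = min (⨅ i, hW1.1.eigenvalues i) (⨅ i, hW2.1.eigenvalues i) /
      max (⨆ i, hP1.1.eigenvalues i) (⨆ i, hP2.1.eigenvalues i))
    (hc3 : c3 = (2 * opNorm (P1 * Bm * H) + 2 * opNorm (Hᵀ * (Bm + L)ᵀ * P2)) /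
      Real.sqrt ((⨅ i, hP1.1.eigenvalues i) * (⨅ i, hP2.1.eigenvalues i)))
    (hc4 : c4 = 2 * opNorm (P1 * Bm) * opNorm Qm / (⨅ i, hP1.1.eigenvalues i) ^ ((3:ℝ)/2) +
      4 * opNorm (P2 * (Bm + L)) * opNorm Qm /
        (Real.sqrt (⨅ i, hP1.1.eigenvalues i) * (⨅ i, hP2.1.eigenvalues i)) +
      2 * opNorm (P2 * (Bm + L)) * opNorm Qm / (⨅ i, hP2.1.eigenvalues i) ^ ((3:ℝ)/2))
    (hc2 : c2 = c1 - c3) (z e : n' → ℝ) :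
    2 * (z ⬝ᵥ (P1 *ᵥ (F *ᵥ z +
        ((z ⬝ᵥ (Qm *ᵥ z) + (fun j => H 0 j) ⬝ᵥ e) • fun i => Bm i 0)))) +
      2 * (e ⬝ᵥ (P2 *ᵥ ((F + L * H) *ᵥ e +
        ((fun j => H 0 j) ⬝ᵥ z) • (fun i => (Bm + L) i 0) +
        (2 * (z ⬝ᵥ (Qm *ᵥ e)) + e ⬝ᵥ (Qm *ᵥ e)) • fun i => (Bm + L) i 0))) ≤
      -c2 * (z ⬝ᵥ (P1 *ᵥ z) + e ⬝ᵥ (P2 *ᵥ e)) +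
        c4 * (z ⬝ᵥ (P1 *ᵥ z) + e ⬝ᵥ (P2 *ᵥ e)) ^ ((3:ℝ)/2) := by
  have hP1t : P1ᵀ = P1 := by
    rw [← Matrix.conjTranspose_eq_transpose_of_trivial]; exact hP1.1
  have hP2t : P2ᵀ = P2 := by
    rw [← Matrix.conjTranspose_eq_transpose_of_trivial]; exact hP2.1
  set l1 := ⨅ i, hP1.1.eigenvalues i with hl1def
  set l2 := ⨅ i, hP2.1.eigenvalues i with hl2def
  set w1 := ⨅ i, hW1.1.eigenvalues i with hw1def
  set w2 := ⨅ i, hW2.1.eigenvalues i with hw2def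
  set s1 := ⨆ i, hP1.1.eigenvalues i with hs1def
  set s2 := ⨆ i, hP2.1.eigenvalues i with hs2def
  have hl1p : 0 < l1 := by
    obtain ⟨i0, hi0⟩ := exists_eq_ciInf_of_finite (f := hP1.1.eigenvalues)
    rw [hl1def, ← hi0]; exact hP1.eigenvalues_pos i0
  have hl2p : 0 < l2 := by
    obtain ⟨i0, hi0⟩ := exists_eq_ciInf_of_finite (f := hP2.1.eigenvalues)
    rw [hl2def, ← hi0]; exact hP2.eigenvalues_pos i0
  have hw1p : 0 < w1 := by
    obtain ⟨i0, hi0⟩ := exists_eq_ciInf_of_finite (f := hW1.1.eigenvalues)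
    rw [hw1def, ← hi0]; exact hW1.eigenvalues_pos i0
  have hw2p : 0 < w2 := by
    obtain ⟨i0, hi0⟩ := exists_eq_ciInf_of_finite (f := hW2.1.eigenvalues)
    rw [hw2def, ← hi0]; exact hW2.eigenvalues_pos i0
  have hs1p : 0 < s1 := by
    obtain ⟨i0, hi0⟩ := exists_eq_ciSup_of_finite (f := hP1.1.eigenvalues)
    rw [hs1def, ← hi0]; exact hP1.eigenvalues_pos i0
  set nz := evnorm z with hnzdef
  set ne' := evnorm e with hnedef
  set sz := ∑ i, z i ^ 2 with hszdef
  set se := ∑ i, e i ^ 2 with hsedef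
  set V1 := z ⬝ᵥ (P1 *ᵥ z) with hV1def
  set V2 := e ⬝ᵥ (P2 *ᵥ e) with hV2def
  have hsz : 0 ≤ sz := Finset.sum_nonneg fun _ _ => sq_nonneg _
  have hse : 0 ≤ se := Finset.sum_nonneg fun _ _ => sq_nonneg _
  have hz1low : l1 * sz ≤ V1 := by
    rw [hl1def, hszdef, hV1def]; exact (rayleigh_bounds P1 hP1.1 z).1
  have hz1up : V1 ≤ s1 * sz := by
    rw [hs1def, hszdef, hV1def]; exact (rayleigh_bounds P1 hP1.1 z).2
  have he2low : l2 * se ≤ V2 := by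
    rw [hl2def, hsedef, hV2def]; exact (rayleigh_bounds P2 hP2.1 e).1
  have he2up : V2 ≤ s2 * se := by
    rw [hs2def, hsedef, hV2def]; exact (rayleigh_bounds P2 hP2.1 e).2
  have hzW : w1 * sz ≤ z ⬝ᵥ (W1 *ᵥ z) := by
    rw [hw1def, hszdef]; exact (rayleigh_bounds W1 hW1.1 z).1
  have heW : w2 * se ≤ e ⬝ᵥ (W2 *ᵥ e) := by
    rw [hw2def, hsedef]; exact (rayleigh_bounds W2 hW2.1 e).1
  have hV1n : 0 ≤ V1 := le_trans (mul_nonneg hl1p.le hsz) hz1low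
  have hV2n : 0 ≤ V2 := le_trans (mul_nonneg hl2p.le hse) he2low
  set V := V1 + V2 with hVdef
  have hVn : 0 ≤ V := add_nonneg hV1n hV2n
  have hnz0 : 0 ≤ nz := by rw [hnzdef]; exact evnorm_nonneg z
  have hne0 : 0 ≤ ne' := by rw [hnedef]; exact evnorm_nonneg e
  have hnz2 : nz ^ 2 = sz := by rw [hnzdef, hszdef]; exact sq_evnorm z
  have hne2 : ne' ^ 2 = se := by rw [hnedef, hsedef]; exact sq_evnorm e
  have hnzV : Real.sqrt l1 * nz ≤ Real.sqrt V := by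
    have h1 : Real.sqrt l1 * nz = Real.sqrt (l1 * sz) := by
      rw [Real.sqrt_mul hl1p.le, hnzdef, hszdef]; rfl
    rw [h1]
    exact Real.sqrt_le_sqrt (by rw [hVdef]; linarith)
  have hneV : Real.sqrt l2 * ne' ≤ Real.sqrt V := by
    have h1 : Real.sqrt l2 * ne' = Real.sqrt (l2 * se) := by
      rw [Real.sqrt_mul hl2p.le, hnedef, hsedef]; rfl
    rw [h1]
    exact Real.sqrt_le_sqrt (by rw [hVdef]; linarith)
  set a1 := opNorm (P1 * Bm * H) with ha1
  set a2 := opNorm (Hᵀ * (Bm + L)ᵀ * P2) with ha2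
  set b1 := opNorm (P1 * Bm) with hb1
  set b2 := opNorm (P2 * (Bm + L)) with hb2
  set q := opNorm Qm with hq
  have ha10 : 0 ≤ a1 := by rw [ha1]; exact norm_nonneg _
  have ha20 : 0 ≤ a2 := by rw [ha2]; exact norm_nonneg _
  have hb10 : 0 ≤ b1 := by rw [hb1]; exact norm_nonneg _
  have hb20 : 0 ≤ b2 := by rw [hb2]; exact norm_nonneg _
  have hq0 : 0 ≤ q := by rw [hq]; exact norm_nonneg _
  clear_value l1 l2 w1 w2 s1 s2 nz ne' sz se V1 V2 V a1 a2 b1 b2 q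
  have hQzz : |z ⬝ᵥ (Qm *ᵥ z)| ≤ q * nz * nz := by
    rw [hq, hnzdef]; exact abs_dot_mulVec_le Qm z z
  have hQze : |z ⬝ᵥ (Qm *ᵥ e)| ≤ q * nz * ne' := by
    rw [hq, hnzdef, hnedef]; exact abs_dot_mulVec_le Qm z e
  have hQee : |e ⬝ᵥ (Qm *ᵥ e)| ≤ q * ne' * ne' := by
    rw [hq, hnedef]; exact abs_dot_mulVec_le Qm e e
  have hM1 : |z ⬝ᵥ ((P1 * Bm * H) *ᵥ e)| ≤ a1 * nz * ne' := by
    rw [ha1, hnzdef, hnedef]; exact abs_dot_mulVec_le _ z e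
  have hM2 : |z ⬝ᵥ ((Hᵀ * (Bm + L)ᵀ * P2) *ᵥ e)| ≤ a2 * nz * ne' := by
    rw [ha2, hnzdef, hnedef]; exact abs_dot_mulVec_le _ z e
  have hPb1 : |z ⬝ᵥ (P1 *ᵥ fun i => Bm i 0)| ≤ b1 * nz := by
    rw [hb1, hnzdef]; exact abs_dot_col_le P1 Bm z
  have hPb2 : |e ⬝ᵥ (P2 *ᵥ fun i => (Bm + L) i 0)| ≤ b2 * ne' := by
    rw [hb2, hnedef]; exact abs_dot_col_le P2 (Bm + L) e
  have hcross1 : z ⬝ᵥ ((P1 * Bm * H) *ᵥ e) =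
      ((fun j => H 0 j) ⬝ᵥ e) * (z ⬝ᵥ (P1 *ᵥ fun i => Bm i 0)) := by
    rw [colrow_mulVec (P1 * Bm) H e, dotProduct_smul, smul_eq_mul, mulVec_col]
  have htrans2 : e ⬝ᵥ ((P2 * (Bm + L) * H) *ᵥ z) =
      z ⬝ᵥ ((Hᵀ * (Bm + L)ᵀ * P2) *ᵥ e) := by
    rw [dot_mulVec_transpose, Matrix.transpose_mul, Matrix.transpose_mul, hP2t, Matrix.mul_assoc]
  have hcross2 : z ⬝ᵥ ((Hᵀ * (Bm + L)ᵀ * P2) *ᵥ e) =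
      ((fun j => H 0 j) ⬝ᵥ z) * (e ⬝ᵥ (P2 *ᵥ fun i => (Bm + L) i 0)) := by
    rw [← htrans2, colrow_mulVec (P2 * (Bm + L)) H z, dotProduct_smul, smul_eq_mul,
      mulVec_col]
  have hL1 := lyap_dot F W1 P1 hP1t hLyap1 z
  have hL2 := lyap_dot (F + L * H) W2 P2 hP2t hLyap2 e
  have key1 : 2 * (z ⬝ᵥ (P1 *ᵥ (F *ᵥ z +
        ((z ⬝ᵥ (Qm *ᵥ z) + (fun j => H 0 j) ⬝ᵥ e) • fun i => Bm i 0)))) =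
      -(z ⬝ᵥ (W1 *ᵥ z)) + 2 * (z ⬝ᵥ ((P1 * Bm * H) *ᵥ e)) +
        2 * (z ⬝ᵥ (Qm *ᵥ z)) * (z ⬝ᵥ (P1 *ᵥ fun i => Bm i 0)) := by
    rw [Matrix.mulVec_add, dotProduct_add, Matrix.mulVec_smul, dotProduct_smul,
      smul_eq_mul, hcross1]
    linear_combination hL1
  have key2 : 2 * (e ⬝ᵥ (P2 *ᵥ ((F + L * H) *ᵥ e +
        ((fun j => H 0 j) ⬝ᵥ z) • (fun i => (Bm + L) i 0) +
        (2 * (z ⬝ᵥ (Qm *ᵥ e)) + e ⬝ᵥ (Qm *ᵥ e)) • fun i => (Bm + L) i 0))) =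
      -(e ⬝ᵥ (W2 *ᵥ e)) + 2 * (z ⬝ᵥ ((Hᵀ * (Bm + L)ᵀ * P2) *ᵥ e)) +
        4 * (z ⬝ᵥ (Qm *ᵥ e)) * (e ⬝ᵥ (P2 *ᵥ fun i => (Bm + L) i 0)) +
        2 * (e ⬝ᵥ (Qm *ᵥ e)) * (e ⬝ᵥ (P2 *ᵥ fun i => (Bm + L) i 0)) := by
    rw [Matrix.mulVec_add, Matrix.mulVec_add, dotProduct_add, dotProduct_add,
      Matrix.mulVec_smul, Matrix.mulVec_smul, dotProduct_smul, dotProduct_smul,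
      smul_eq_mul, smul_eq_mul, hcross2]
    linear_combination hL2
  have GW : c1 * V ≤ z ⬝ᵥ (W1 *ᵥ z) + e ⬝ᵥ (W2 *ᵥ e) := by
    have hMx : (0:ℝ) < max s1 s2 := lt_of_lt_of_le hs1p (le_max_left _ _)
    have hmm : 0 < min w1 w2 := lt_min hw1p hw2p
    have hVle : V ≤ max s1 s2 * sz + max s1 s2 * se := by
      have e1 : V1 ≤ max s1 s2 * sz :=
        le_trans hz1up (mul_le_mul_of_nonneg_right (le_max_left _ _) hsz)
      have e2 : V2 ≤ max s1 s2 * se :=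
        le_trans he2up (mul_le_mul_of_nonneg_right (le_max_right _ _) hse)
      rw [hVdef]; linarith
    have h1 : c1 * V ≤ c1 * (max s1 s2 * sz + max s1 s2 * se) :=
      mul_le_mul_of_nonneg_left hVle (by rw [hc1]; exact div_nonneg hmm.le hMx.le)
    have h2 : c1 * (max s1 s2 * sz + max s1 s2 * se) = min w1 w2 * sz + min w1 w2 * se := by
      rw [hc1, div_mul_eq_mul_div, div_eq_iff hMx.ne']; ring
    have h3 : min w1 w2 * sz ≤ w1 * sz := mul_le_mul_of_nonneg_right (min_le_left _ _) hsz
    have h4 : min w1 w2 * se ≤ w2 * se := mul_le_mul_of_nonneg_right (min_le_right _ _) hse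
    linarith
  have GC : 2 * (z ⬝ᵥ ((P1 * Bm * H) *ᵥ e)) + 2 * (z ⬝ᵥ ((Hᵀ * (Bm + L)ᵀ * P2) *ᵥ e)) ≤
      c3 * V := by
    have hs : 0 < Real.sqrt (l1 * l2) := Real.sqrt_pos.mpr (mul_pos hl1p hl2p)
    have hprod : nz * ne' * Real.sqrt (l1 * l2) ≤ V := by
      have hmm := mul_le_mul hnzV hneV (mul_nonneg (Real.sqrt_nonneg _) hne0)
        (Real.sqrt_nonneg _)
      rw [Real.mul_self_sqrt hVn] at hmm
      calc nz * ne' * Real.sqrt (l1 * l2)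
          = (Real.sqrt l1 * nz) * (Real.sqrt l2 * ne') := by
            rw [Real.sqrt_mul hl1p.le]; ring
        _ ≤ V := hmm
    have h1 : 2 * (z ⬝ᵥ ((P1 * Bm * H) *ᵥ e)) ≤ 2 * (a1 * nz * ne') := by
      have := le_abs_self (z ⬝ᵥ ((P1 * Bm * H) *ᵥ e)); linarith
    have h2 : 2 * (z ⬝ᵥ ((Hᵀ * (Bm + L)ᵀ * P2) *ᵥ e)) ≤ 2 * (a2 * nz * ne') := by
      have := le_abs_self (z ⬝ᵥ ((Hᵀ * (Bm + L)ᵀ * P2) *ᵥ e)); linarith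
    have h3 : (2 * a1 + 2 * a2) * (nz * ne') ≤ (2 * a1 + 2 * a2) * (V / Real.sqrt (l1 * l2)) :=
      mul_le_mul_of_nonneg_left ((le_div_iff₀ hs).mpr hprod) (by linarith)
    have h4 : c3 * V = (2 * a1 + 2 * a2) * (V / Real.sqrt (l1 * l2)) := by rw [hc3]; ring
    have h5 : 2 * (a1 * nz * ne') + 2 * (a2 * nz * ne') = (2 * a1 + 2 * a2) * (nz * ne') := by
      ring
    linarith
  have hV32 : V ^ ((3:ℝ)/2) = Real.sqrt V ^ 3 := rpow32 V hVn
  have hl132 : l1 ^ ((3:ℝ)/2) = Real.sqrt l1 ^ 3 := rpow32 l1 hl1p.le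
  have hl232 : l2 ^ ((3:ℝ)/2) = Real.sqrt l2 ^ 3 := rpow32 l2 hl2p.le
  have hsq1 : 0 < Real.sqrt l1 := Real.sqrt_pos.mpr hl1p
  have hsq2 : 0 < Real.sqrt l2 := Real.sqrt_pos.mpr hl2p
  have t1 : 2 * (z ⬝ᵥ (Qm *ᵥ z)) * (z ⬝ᵥ (P1 *ᵥ fun i => Bm i 0)) ≤
      2 * ((q * nz * nz) * (b1 * nz)) := by
    have := mul_le_of_abs _ _ _ _ hQzz hPb1; linarith
  have t2 : 4 * (z ⬝ᵥ (Qm *ᵥ e)) * (e ⬝ᵥ (P2 *ᵥ fun i => (Bm + L) i 0)) ≤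
      4 * ((q * nz * ne') * (b2 * ne')) := by
    have := mul_le_of_abs _ _ _ _ hQze hPb2; linarith
  have t3 : 2 * (e ⬝ᵥ (Qm *ᵥ e)) * (e ⬝ᵥ (P2 *ᵥ fun i => (Bm + L) i 0)) ≤
      2 * ((q * ne' * ne') * (b2 * ne')) := by
    have := mul_le_of_abs _ _ _ _ hQee hPb2; linarith
  have u1 : 2 * ((q * nz * nz) * (b1 * nz)) ≤
      (2 * b1 * q / l1 ^ ((3:ℝ)/2)) * V ^ ((3:ℝ)/2) := by
    rw [hV32, hl132, div_mul_eq_mul_div, le_div_iff₀ (pow_pos hsq1 3)]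
    have hpow : (Real.sqrt l1 * nz) ^ 3 ≤ Real.sqrt V ^ 3 :=
      pow_le_pow_left₀ (mul_nonneg hsq1.le hnz0) hnzV 3
    calc 2 * ((q * nz * nz) * (b1 * nz)) * Real.sqrt l1 ^ 3
        = (2 * b1 * q) * (Real.sqrt l1 * nz) ^ 3 := by ring
      _ ≤ (2 * b1 * q) * Real.sqrt V ^ 3 := by
          apply mul_le_mul_of_nonneg_left hpow
          have : (0:ℝ) ≤ 2 * b1 := by linarith
          exact mul_nonneg this hq0
      _ = 2 * b1 * q * Real.sqrt V ^ 3 := by ring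
  have u2 : 4 * ((q * nz * ne') * (b2 * ne')) ≤
      (4 * b2 * q / (Real.sqrt l1 * l2)) * V ^ ((3:ℝ)/2) := by
    rw [hV32, div_mul_eq_mul_div, le_div_iff₀ (mul_pos hsq1 hl2p)]
    have hpow : (Real.sqrt l1 * nz) * (Real.sqrt l2 * ne') ^ 2 ≤ Real.sqrt V ^ 3 := by
      have h2 : (Real.sqrt l2 * ne') ^ 2 ≤ Real.sqrt V ^ 2 :=
        pow_le_pow_left₀ (mul_nonneg hsq2.le hne0) hneV 2
      calc (Real.sqrt l1 * nz) * (Real.sqrt l2 * ne') ^ 2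
          ≤ Real.sqrt V * Real.sqrt V ^ 2 :=
            mul_le_mul hnzV h2 (sq_nonneg _) (Real.sqrt_nonneg _)
        _ = Real.sqrt V ^ 3 := by ring
    have hll : Real.sqrt l2 ^ 2 = l2 := Real.sq_sqrt hl2p.le
    calc 4 * ((q * nz * ne') * (b2 * ne')) * (Real.sqrt l1 * l2)
        = (4 * b2 * q) * ((Real.sqrt l1 * nz) * (Real.sqrt l2 * ne') ^ 2) := by
          linear_combination (-(4 * q * nz * ne' ^ 2 * b2 * Real.sqrt l1)) * hll
      _ ≤ (4 * b2 * q) * Real.sqrt V ^ 3 := by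
          apply mul_le_mul_of_nonneg_left hpow
          have : (0:ℝ) ≤ 4 * b2 := by linarith
          exact mul_nonneg this hq0
      _ = 4 * b2 * q * Real.sqrt V ^ 3 := by ring
  have u3 : 2 * ((q * ne' * ne') * (b2 * ne')) ≤
      (2 * b2 * q / l2 ^ ((3:ℝ)/2)) * V ^ ((3:ℝ)/2) := by
    rw [hV32, hl232, div_mul_eq_mul_div, le_div_iff₀ (pow_pos hsq2 3)]
    have hpow : (Real.sqrt l2 * ne') ^ 3 ≤ Real.sqrt V ^ 3 :=
      pow_le_pow_left₀ (mul_nonneg hsq2.le hne0) hneV 3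
    calc 2 * ((q * ne' * ne') * (b2 * ne')) * Real.sqrt l2 ^ 3
        = (2 * b2 * q) * (Real.sqrt l2 * ne') ^ 3 := by ring
      _ ≤ (2 * b2 * q) * Real.sqrt V ^ 3 := by
          apply mul_le_mul_of_nonneg_left hpow
          have : (0:ℝ) ≤ 2 * b2 := by linarith
          exact mul_nonneg this hq0
      _ = 2 * b2 * q * Real.sqrt V ^ 3 := by ring
  have G3 : 2 * (z ⬝ᵥ (Qm *ᵥ z)) * (z ⬝ᵥ (P1 *ᵥ fun i => Bm i 0)) +
      4 * (z ⬝ᵥ (Qm *ᵥ e)) * (e ⬝ᵥ (P2 *ᵥ fun i => (Bm + L) i 0)) +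
      2 * (e ⬝ᵥ (Qm *ᵥ e)) * (e ⬝ᵥ (P2 *ᵥ fun i => (Bm + L) i 0)) ≤
      c4 * V ^ ((3:ℝ)/2) := by
    have hc4' : c4 * V ^ ((3:ℝ)/2) =
        (2 * b1 * q / l1 ^ ((3:ℝ)/2)) * V ^ ((3:ℝ)/2) +
        (4 * b2 * q / (Real.sqrt l1 * l2)) * V ^ ((3:ℝ)/2) +
        (2 * b2 * q / l2 ^ ((3:ℝ)/2)) * V ^ ((3:ℝ)/2) := by rw [hc4]; ring
    linarith
  calc 2 * (z ⬝ᵥ (P1 *ᵥ (F *ᵥ z +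
        ((z ⬝ᵥ (Qm *ᵥ z) + (fun j => H 0 j) ⬝ᵥ e) • fun i => Bm i 0)))) +
      2 * (e ⬝ᵥ (P2 *ᵥ ((F + L * H) *ᵥ e +
        ((fun j => H 0 j) ⬝ᵥ z) • (fun i => (Bm + L) i 0) +
        (2 * (z ⬝ᵥ (Qm *ᵥ e)) + e ⬝ᵥ (Qm *ᵥ e)) • fun i => (Bm + L) i 0)))
      = (-(z ⬝ᵥ (W1 *ᵥ z)) - (e ⬝ᵥ (W2 *ᵥ e))) +
        (2 * (z ⬝ᵥ ((P1 * Bm * H) *ᵥ e)) + 2 * (z ⬝ᵥ ((Hᵀ * (Bm + L)ᵀ * P2) *ᵥ e))) +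
        (2 * (z ⬝ᵥ (Qm *ᵥ z)) * (z ⬝ᵥ (P1 *ᵥ fun i => Bm i 0)) +
          4 * (z ⬝ᵥ (Qm *ᵥ e)) * (e ⬝ᵥ (P2 *ᵥ fun i => (Bm + L) i 0)) +
          2 * (e ⬝ᵥ (Qm *ᵥ e)) * (e ⬝ᵥ (P2 *ᵥ fun i => (Bm + L) i 0))) := by
        rw [key1, key2]; ring
    _ ≤ -(c1 * V) + c3 * V + c4 * V ^ ((3:ℝ)/2) := by linarith
    _ = -c2 * V + c4 * V ^ ((3:ℝ)/2) := by rw [hc2]; ring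

/-- the Lyapunov derivative bound
`2z^⊤P_1ż + 2e^⊤P_2ė ≤ −c_2 V + c_4 V^{3/2}`. -/
theorem lyapunov_derivative_bound
    (Ap : Matrix (Fin np) (Fin np) ℝ) (Ac : Matrix (Fin nc) (Fin nc) ℝ)
    (Bp : Matrix (Fin np) (Fin 1) ℝ) (Bc : Matrix (Fin nc) (Fin 1) ℝ)
    (Cc : Matrix (Fin 1) (Fin nc) ℝ) (Dc : ℝ)
    (Qp : Matrix (Fin np) (Fin np) ℝ) (hQp : Qp.IsSymm)
    (π : Fin np → ℝ) (L : Matrix (Fin np ⊕ Fin nc) (Fin 1) ℝ)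
    (W1 W2 P1 P2 : Matrix (Fin np ⊕ Fin nc) (Fin np ⊕ Fin nc) ℝ)
    (hW1 : W1.PosDef) (hW2 : W2.PosDef) (hP1 : P1.PosDef) (hP2 : P2.PosDef)
    (hLyap1 : (Fbar Ap Ac Bp Bc Cc Dc Qp π)ᵀ * P1 + P1 * Fbar Ap Ac Bp Bc Cc Dc Qp π = -W1)
    (hLyap2 : (Fbar Ap Ac Bp Bc Cc Dc Qp π + L * Hbar Qp π)ᵀ * P2 +
      P2 * (Fbar Ap Ac Bp Bc Cc Dc Qp π + L * Hbar Qp π) = -W2)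
    (c1 c3 c4 c2 : ℝ)
    (hc1 : c1 = min (⨅ i, hW1.1.eigenvalues i) (⨅ i, hW2.1.eigenvalues i) /
      max (⨆ i, hP1.1.eigenvalues i) (⨆ i, hP2.1.eigenvalues i))
    (hc3 : c3 = (2 * opNorm (P1 * Bmat Bp Bc Dc * Hbar Qp π (nc := nc)) +
        2 * opNorm ((Hbar Qp π (nc := nc))ᵀ * (Bmat Bp Bc Dc + L)ᵀ * P2)) /
      Real.sqrt ((⨅ i, hP1.1.eigenvalues i) * (⨅ i, hP2.1.eigenvalues i)))
    (hc4 : c4 =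
      2 * opNorm (P1 * Bmat Bp Bc Dc) * opNorm (Qmat Qp (nc := nc)) /
        (⨅ i, hP1.1.eigenvalues i) ^ ((3 : ℝ) / 2) +
      4 * opNorm (P2 * (Bmat Bp Bc Dc + L)) * opNorm (Qmat Qp (nc := nc)) /
        (Real.sqrt (⨅ i, hP1.1.eigenvalues i) * (⨅ i, hP2.1.eigenvalues i)) +
      2 * opNorm (P2 * (Bmat Bp Bc Dc + L)) * opNorm (Qmat Qp (nc := nc)) /
        (⨅ i, hP2.1.eigenvalues i) ^ ((3 : ℝ) / 2))
    (hc2 : c2 = c1 - c3) :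
    ∀ z e : Fin np ⊕ Fin nc → ℝ,
      2 * (z ⬝ᵥ (P1 *ᵥ zdot Ap Ac Bp Bc Cc Dc Qp π z e)) +
          2 * (e ⬝ᵥ (P2 *ᵥ edot Ap Ac Bp Bc Cc Dc Qp π L z e)) ≤
        -c2 * (z ⬝ᵥ (P1 *ᵥ z) + e ⬝ᵥ (P2 *ᵥ e)) +
          c4 * (z ⬝ᵥ (P1 *ᵥ z) + e ⬝ᵥ (P2 *ᵥ e)) ^ ((3 : ℝ) / 2) := by
  intro z e
  rcases isEmpty_or_nonempty (Fin np ⊕ Fin nc) with hE | hNE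
  · simp only [dotProduct, Finset.univ_eq_empty, Finset.sum_empty]
    have h0 : ((0:ℝ) + 0) ^ ((3:ℝ)/2) = 0 := by
      rw [add_zero]
      exact Real.zero_rpow (by norm_num)
    rw [h0]
    norm_num
  · have hzd : zdot Ap Ac Bp Bc Cc Dc Qp π z e =
        Fbar Ap Ac Bp Bc Cc Dc Qp π *ᵥ z +
          ((z ⬝ᵥ (Qmat Qp *ᵥ z) + (fun j => Hbar Qp π 0 j) ⬝ᵥ e) •
            fun i => Bmat Bp Bc Dc i 0) := by
      unfold zdot Fbar
      rw [Matrix.add_mulVec, colrow_mulVec]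
      funext i
      simp only [Pi.add_apply, Pi.smul_apply, smul_eq_mul, dotProduct_add]
      ring
    have hzd2 : edot Ap Ac Bp Bc Cc Dc Qp π L z e =
        (Fbar Ap Ac Bp Bc Cc Dc Qp π + L * Hbar Qp π) *ᵥ e +
          ((fun j => Hbar Qp π 0 j) ⬝ᵥ z) • (fun i => (Bmat Bp Bc Dc + L) i 0) +
          (2 * (z ⬝ᵥ (Qmat Qp *ᵥ e)) + e ⬝ᵥ (Qmat Qp *ᵥ e)) •
            fun i => (Bmat Bp Bc Dc + L) i 0 := by
      unfold edot
      rw [colrow_mulVec]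
    rw [hzd, hzd2]
    exact main_core (Fbar Ap Ac Bp Bc Cc Dc Qp π) (Qmat Qp) W1 W2 P1 P2
      (Bmat Bp Bc Dc) L (Hbar Qp π) hW1 hW2 hP1 hP2 hLyap1 hLyap2 c1 c3 c4 c2
      hc1 hc3 hc4 hc2 z e
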